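/- Data processing inequality for compound inf-information rates: Let S be a nonempty set and, for each integer n ≥ 1, let A_n, B_n, C_n be nonempty finite types and P_{n,s} ∈ PMF(A_n × B_n × C_n) a joint distribution for each s ∈ S under which X → Y → Z is a Markov chain, i.e. P_{n,s}(x,y,z)·P^Y_{n,s}(y) = P^{XY}_{n,s}(x,y)·P^{YZ}_{n,s}(y,z) for all (x,y,z). Then, assuming the quantities involved are finite, cinf I(X;Y) ≥ cinf I(X;Z); moreover, if csup I(X;Y|Z) = 0 then cinf I(X;Y) = cinf I(X;Z). -/

import Mathlib

open Filter
open scoped ENNReal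

noncomputable section

/-- Generic compound infimum set: rates `R` with `sup_s P_{W∼P_{n,s}}(f_{n,s}(W) ≤ R) → 0`. -/
def cinfSet {S : Type*} {T : ℕ → Type*} [∀ n, Fintype (T n)]
    (P : ∀ n, S → PMF (T n)) (f : ∀ n, S → T n → ℝ) : Set ℝ :=
  {R : ℝ | Tendsto (fun n => ⨆ s : S,
      ∑ w : T n, {w' : T n | f n s w' ≤ R}.indicator (fun w' => P n s w') w)
    atTop (nhds 0)}

/-- Generic compound infimum. -/
def cinf {S : Type*} {T : ℕ → Type*} [∀ n, Fintype (T n)]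
    (P : ∀ n, S → PMF (T n)) (f : ∀ n, S → T n → ℝ) : ℝ := sSup (cinfSet P f)

/-- Generic compound supremum set: rates `R` with `sup_s P_{W∼P_{n,s}}(f_{n,s}(W) ≥ R) → 0`. -/
def csupSet {S : Type*} {T : ℕ → Type*} [∀ n, Fintype (T n)]
    (P : ∀ n, S → PMF (T n)) (f : ∀ n, S → T n → ℝ) : Set ℝ :=
  {R : ℝ | Tendsto (fun n => ⨆ s : S,
      ∑ w : T n, {w' : T n | R ≤ f n s w'}.indicator (fun w' => P n s w') w)
    atTop (nhds 0)}

/-- Generic compound supremum. -/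
def csup {S : Type*} {T : ℕ → Type*} [∀ n, Fintype (T n)]
    (P : ∀ n, S → PMF (T n)) (f : ∀ n, S → T n → ℝ) : ℝ := sInf (csupSet P f)

section Triple

variable {S : Type*} {A B C : ℕ → Type*}
  [∀ n, Fintype (A n)] [∀ n, Fintype (B n)] [∀ n, Fintype (C n)]

/-- Marginal on `A n` of a joint PMF on `A n × B n × C n`. -/
def mX (P : ∀ n, S → PMF (A n × B n × C n)) (n : ℕ) (s : S) (x : A n) : ℝ≥0∞ :=
  ∑ y : B n, ∑ c : C n, P n s (x, y, c)

/-- Marginal on `B n`. -/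
def mY (P : ∀ n, S → PMF (A n × B n × C n)) (n : ℕ) (s : S) (y : B n) : ℝ≥0∞ :=
  ∑ x : A n, ∑ c : C n, P n s (x, y, c)

/-- Marginal on `C n`. -/
def mZ (P : ∀ n, S → PMF (A n × B n × C n)) (n : ℕ) (s : S) (c : C n) : ℝ≥0∞ :=
  ∑ x : A n, ∑ y : B n, P n s (x, y, c)

/-- Marginal on `A n × B n`. -/
def mXY (P : ∀ n, S → PMF (A n × B n × C n)) (n : ℕ) (s : S) (x : A n) (y : B n) : ℝ≥0∞ :=
  ∑ c : C n, P n s (x, y, c)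

/-- Marginal on `A n × C n`. -/
def mXZ (P : ∀ n, S → PMF (A n × B n × C n)) (n : ℕ) (s : S) (x : A n) (c : C n) : ℝ≥0∞ :=
  ∑ y : B n, P n s (x, y, c)

/-- Marginal on `B n × C n`. -/
def mYZ (P : ∀ n, S → PMF (A n × B n × C n)) (n : ℕ) (s : S) (y : B n) (c : C n) : ℝ≥0∞ :=
  ∑ x : A n, P n s (x, y, c)

/-- Information density rate `i_{n,s}(X;Y)`. -/
def iXY (P : ∀ n, S → PMF (A n × B n × C n)) (n : ℕ) (s : S) (w : A n × B n × C n) : ℝ :=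
  (1 / (n : ℝ)) * Real.log ((mXY P n s w.1 w.2.1).toReal /
    ((mX P n s w.1).toReal * (mY P n s w.2.1).toReal))

/-- Information density rate `i_{n,s}(X;Z)`. -/
def iXZ (P : ∀ n, S → PMF (A n × B n × C n)) (n : ℕ) (s : S) (w : A n × B n × C n) : ℝ :=
  (1 / (n : ℝ)) * Real.log ((mXZ P n s w.1 w.2.2).toReal /
    ((mX P n s w.1).toReal * (mZ P n s w.2.2).toReal))

/-- Conditional information density rate `i_{n,s}(X;Y|Z)`, i.e.
`(1/n)·ln( P(x,y,z)·P(z) / (P(x,z)·P(y,z)) )`. -/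
def iXYgZ (P : ∀ n, S → PMF (A n × B n × C n)) (n : ℕ) (s : S) (w : A n × B n × C n) : ℝ :=
  (1 / (n : ℝ)) * Real.log (((P n s w).toReal * (mZ P n s w.2.2).toReal) /
    ((mXZ P n s w.1 w.2.2).toReal * (mYZ P n s w.2.1 w.2.2).toReal))

end Triple

section AuxDP

variable {S : Type*} {A B C : ℕ → Type*}
  [∀ n, Fintype (A n)] [∀ n, Fintype (B n)] [∀ n, Fintype (C n)]

/-- generic union bound 1 -/
lemma dp_union1 {T : Type*} [Fintype T] (p : T → ℝ≥0∞) (f g h : T → ℝ) (a b : ℝ)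
    (hle : ∀ w, p w ≠ 0 → g w + h w ≤ f w) :
    ∑ w : T, {w' : T | f w' ≤ a + b}.indicator p w ≤
      (∑ w : T, {w' : T | g w' ≤ a}.indicator p w) +
      ∑ w : T, {w' : T | h w' ≤ b}.indicator p w := by
  rw [← Finset.sum_add_distrib]
  refine Finset.sum_le_sum fun w _ => ?_
  by_cases hp : p w = 0
  · calc {w' : T | f w' ≤ a + b}.indicator p w ≤ p w := Set.indicator_le_self _ _ w
      _ = 0 := hp
      _ ≤ _ := zero_le
  by_cases hf : f w ≤ a + b
  · rw [Set.indicator_of_mem (show w ∈ {w' : T | f w' ≤ a + b} from hf) p]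
    by_cases hg : g w ≤ a
    · rw [Set.indicator_of_mem (show w ∈ {w' : T | g w' ≤ a} from hg) p]; exact le_self_add
    · have hh : h w ≤ b := by
        have := hle w hp; push_neg at hg; linarith
      rw [Set.indicator_of_mem (show w ∈ {w' : T | h w' ≤ b} from hh) p]; exact le_add_self
  · rw [Set.indicator_of_notMem (show w ∉ {w' : T | f w' ≤ a + b} from hf) p]; exact zero_le

/-- generic union bound 2 -/
lemma dp_union2 {T : Type*} [Fintype T] (p : T → ℝ≥0∞) (f g h : T → ℝ) (a b : ℝ)
    (hle : ∀ w, p w ≠ 0 → f w ≤ g w + h w) :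
    ∑ w : T, {w' : T | g w' ≤ a}.indicator p w ≤
      (∑ w : T, {w' : T | f w' ≤ a + b}.indicator p w) +
      ∑ w : T, {w' : T | b ≤ h w'}.indicator p w := by
  rw [← Finset.sum_add_distrib]
  refine Finset.sum_le_sum fun w _ => ?_
  by_cases hp : p w = 0
  · calc {w' : T | g w' ≤ a}.indicator p w ≤ p w := Set.indicator_le_self _ _ w
      _ = 0 := hp
      _ ≤ _ := zero_le
  by_cases hg : g w ≤ a
  · rw [Set.indicator_of_mem (show w ∈ {w' : T | g w' ≤ a} from hg) p]
    by_cases hf : f w ≤ a + b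
    · rw [Set.indicator_of_mem (show w ∈ {w' : T | f w' ≤ a + b} from hf) p]; exact le_self_add
    · have hh : b ≤ h w := by
        have := hle w hp; push_neg at hf; linarith
      rw [Set.indicator_of_mem (show w ∈ {w' : T | b ≤ h w'} from hh) p]; exact le_add_self
  · rw [Set.indicator_of_notMem (show w ∉ {w' : T | g w' ≤ a} from hg) p]; exact zero_le

lemma dp_P_ne_top (P : ∀ n, S → PMF (A n × B n × C n)) (n : ℕ) (s : S)
    (w : A n × B n × C n) : P n s w ≠ ⊤ := (P n s).apply_ne_top w

lemma dp_mX_ne_top (P : ∀ n, S → PMF (A n × B n × C n)) (n : ℕ) (s : S) (x : A n) :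
    mX P n s x ≠ ⊤ :=
  (ENNReal.sum_lt_top.mpr fun _ _ => (ENNReal.sum_lt_top.mpr fun _ _ =>
    (dp_P_ne_top P n s _).lt_top)).ne

lemma dp_mY_ne_top (P : ∀ n, S → PMF (A n × B n × C n)) (n : ℕ) (s : S) (y : B n) :
    mY P n s y ≠ ⊤ :=
  (ENNReal.sum_lt_top.mpr fun _ _ => (ENNReal.sum_lt_top.mpr fun _ _ =>
    (dp_P_ne_top P n s _).lt_top)).ne

lemma dp_mZ_ne_top (P : ∀ n, S → PMF (A n × B n × C n)) (n : ℕ) (s : S) (z : C n) :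
    mZ P n s z ≠ ⊤ :=
  (ENNReal.sum_lt_top.mpr fun _ _ => (ENNReal.sum_lt_top.mpr fun _ _ =>
    (dp_P_ne_top P n s _).lt_top)).ne

lemma dp_mXY_ne_top (P : ∀ n, S → PMF (A n × B n × C n)) (n : ℕ) (s : S) (x : A n) (y : B n) :
    mXY P n s x y ≠ ⊤ :=
  (ENNReal.sum_lt_top.mpr fun _ _ => (dp_P_ne_top P n s _).lt_top).ne

lemma dp_mXZ_ne_top (P : ∀ n, S → PMF (A n × B n × C n)) (n : ℕ) (s : S) (x : A n) (z : C n) :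
    mXZ P n s x z ≠ ⊤ :=
  (ENNReal.sum_lt_top.mpr fun _ _ => (dp_P_ne_top P n s _).lt_top).ne

lemma dp_mYZ_ne_top (P : ∀ n, S → PMF (A n × B n × C n)) (n : ℕ) (s : S) (y : B n) (z : C n) :
    mYZ P n s y z ≠ ⊤ :=
  (ENNReal.sum_lt_top.mpr fun _ _ => (dp_P_ne_top P n s _).lt_top).ne

/-- positivity of all marginals at a point of positive mass -/
lemma dp_pos (P : ∀ n, S → PMF (A n × B n × C n)) (n : ℕ) (s : S)
    (x : A n) (y : B n) (z : C n) (hp : P n s (x, y, z) ≠ 0) :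
    0 < (P n s (x, y, z)).toReal ∧ 0 < (mX P n s x).toReal ∧ 0 < (mY P n s y).toReal ∧
    0 < (mZ P n s z).toReal ∧ 0 < (mXY P n s x y).toReal ∧ 0 < (mXZ P n s x z).toReal ∧
    0 < (mYZ P n s y z).toReal := by
  refine ⟨ENNReal.toReal_pos hp (dp_P_ne_top P n s _), ?_, ?_, ?_, ?_, ?_, ?_⟩
  · refine ENNReal.toReal_pos (fun h0 => hp ?_) (dp_mX_ne_top P n s x)
    have h1 := Finset.sum_eq_zero_iff.mp h0 y (Finset.mem_univ y)
    exact Finset.sum_eq_zero_iff.mp h1 z (Finset.mem_univ z)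
  · refine ENNReal.toReal_pos (fun h0 => hp ?_) (dp_mY_ne_top P n s y)
    have h1 := Finset.sum_eq_zero_iff.mp h0 x (Finset.mem_univ x)
    exact Finset.sum_eq_zero_iff.mp h1 z (Finset.mem_univ z)
  · refine ENNReal.toReal_pos (fun h0 => hp ?_) (dp_mZ_ne_top P n s z)
    have h1 := Finset.sum_eq_zero_iff.mp h0 x (Finset.mem_univ x)
    exact Finset.sum_eq_zero_iff.mp h1 y (Finset.mem_univ y)
  · refine ENNReal.toReal_pos (fun h0 => hp ?_) (dp_mXY_ne_top P n s x y)
    exact Finset.sum_eq_zero_iff.mp h0 z (Finset.mem_univ z)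
  · refine ENNReal.toReal_pos (fun h0 => hp ?_) (dp_mXZ_ne_top P n s x z)
    exact Finset.sum_eq_zero_iff.mp h0 y (Finset.mem_univ y)
  · refine ENNReal.toReal_pos (fun h0 => hp ?_) (dp_mYZ_ne_top P n s y z)
    exact Finset.sum_eq_zero_iff.mp h0 x (Finset.mem_univ x)

/-- chain rule at a point of positive mass, under the Markov condition -/
lemma dp_chain (P : ∀ n, S → PMF (A n × B n × C n))
    (hMarkov : ∀ n s x y c,
      P n s (x, y, c) * mY P n s y = mXY P n s x y * mYZ P n s y c)
    (n : ℕ) (s : S) (w : A n × B n × C n) (hw : P n s w ≠ 0) :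
    iXY P n s w = iXZ P n s w + iXYgZ P n s w := by
  obtain ⟨x, y, z⟩ := w
  obtain ⟨hpx, hx, hy, hz, hxy, hxz, hyz⟩ := dp_pos P n s x y z hw
  have hMr : (P n s (x, y, z)).toReal * (mY P n s y).toReal =
      (mXY P n s x y).toReal * (mYZ P n s y z).toReal := by
    rw [← ENNReal.toReal_mul, ← ENNReal.toReal_mul, hMarkov n s x y z]
  show (1 / (n : ℝ)) * Real.log _ = (1 / (n : ℝ)) * Real.log _ + (1 / (n : ℝ)) * Real.log _
  rw [← mul_add]
  congr 1
  have h1 : (0:ℝ) < (mXZ P n s x z).toReal / ((mX P n s x).toReal * (mZ P n s z).toReal) :=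
    div_pos hxz (mul_pos hx hz)
  have h2 : (0:ℝ) < (P n s (x, y, z)).toReal * (mZ P n s z).toReal /
      ((mXZ P n s x z).toReal * (mYZ P n s y z).toReal) :=
    div_pos (mul_pos hpx hz) (mul_pos hxz hyz)
  rw [← Real.log_mul h1.ne' h2.ne']
  congr 1
  field_simp
  linear_combination (-1 : ℝ) * hMr

lemma dp_sum_mZ (P : ∀ n, S → PMF (A n × B n × C n)) (n : ℕ) (s : S) :
    ∑ z : C n, mZ P n s z = 1 := by
  have h1 : ∑ w : A n × B n × C n, P n s w = 1 := by
    rw [← tsum_fintype (L := .unconditional _)]; exact (P n s).tsum_coe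
  calc ∑ z : C n, mZ P n s z = ∑ z : C n, ∑ x : A n, ∑ y : B n, P n s (x, y, z) := rfl
    _ = ∑ x : A n, ∑ z : C n, ∑ y : B n, P n s (x, y, z) := Finset.sum_comm
    _ = ∑ x : A n, ∑ y : B n, ∑ z : C n, P n s (x, y, z) :=
        Finset.sum_congr rfl fun x _ => Finset.sum_comm
    _ = ∑ w : A n × B n × C n, P n s w := by
        rw [Fintype.sum_prod_type]
        exact Finset.sum_congr rfl fun x _ =>
          (Fintype.sum_prod_type (f := fun p : B n × C n => P n s (x, p))).symm
    _ = 1 := h1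

/-- key exponential bound on the probability that the conditional density is small -/
lemma dp_exp_bound (P : ∀ n, S → PMF (A n × B n × C n)) (n : ℕ) (s : S) (γ : ℝ) (hγ : 0 < γ) :
    ∑ w : A n × B n × C n, {w' : A n × B n × C n | iXYgZ P n s w' ≤ -γ}.indicator
      (fun w' => P n s w') w ≤ ENNReal.ofReal (Real.exp (-((n : ℝ) * γ))) := by
  rcases Nat.eq_zero_or_pos n with hn | hn
  · subst hn
    have : ∑ w : A 0 × B 0 × C 0, {w' : A 0 × B 0 × C 0 | iXYgZ P 0 s w' ≤ -γ}.indicator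
        (fun w' => P 0 s w') w ≤ ∑ w : A 0 × B 0 × C 0, P 0 s w :=
      Finset.sum_le_sum fun w _ => Set.indicator_le_self _ _ w
    rw [show ∑ w : A 0 × B 0 × C 0, P 0 s w = 1 by rw [← tsum_fintype (L := .unconditional _)]; exact (P 0 s).tsum_coe]
      at this
    simpa using this
  · have hnR : (0:ℝ) < (n : ℝ) := by exact_mod_cast hn
    set e : ℝ := Real.exp (-((n : ℝ) * γ)) with he
    have hepos : 0 < e := Real.exp_pos _
    have key : ∀ w : A n × B n × C n,
        {w' : A n × B n × C n | iXYgZ P n s w' ≤ -γ}.indicator (fun w' => P n s w') w ≤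
        ENNReal.ofReal (e * ((mXZ P n s w.1 w.2.2).toReal * (mYZ P n s w.2.1 w.2.2).toReal /
          (mZ P n s w.2.2).toReal)) := by
      intro w
      by_cases hp : P n s w = 0
      · calc _ ≤ P n s w := Set.indicator_le_self _ _ w
          _ = 0 := hp
          _ ≤ _ := zero_le
      by_cases hmem : iXYgZ P n s w ≤ -γ
      · rw [Set.indicator_of_mem
          (show w ∈ {w' : A n × B n × C n | iXYgZ P n s w' ≤ -γ} from hmem)]
        obtain ⟨x, y, z⟩ := w
        obtain ⟨hpx, hx, hy, hz, hxy, hxz, hyz⟩ := dp_pos P n s x y z hp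
        have harg : (0:ℝ) < (P n s (x, y, z)).toReal * (mZ P n s z).toReal /
            ((mXZ P n s x z).toReal * (mYZ P n s y z).toReal) :=
          div_pos (mul_pos hpx hz) (mul_pos hxz hyz)
        have hlog : Real.log ((P n s (x, y, z)).toReal * (mZ P n s z).toReal /
            ((mXZ P n s x z).toReal * (mYZ P n s y z).toReal)) ≤ -((n : ℝ) * γ) := by
          have h := hmem
          unfold iXYgZ at h
          have := mul_le_mul_of_nonneg_left h hnR.le
          rw [← mul_assoc, mul_one_div, div_self hnR.ne', one_mul] at this
          linarith [this]
        have harg2 : (P n s (x, y, z)).toReal * (mZ P n s z).toReal /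
            ((mXZ P n s x z).toReal * (mYZ P n s y z).toReal) ≤ e := by
          calc _ = Real.exp (Real.log _) := (Real.exp_log harg).symm
            _ ≤ e := Real.exp_le_exp.mpr hlog
        have hfinal : (P n s (x, y, z)).toReal ≤
            e * ((mXZ P n s x z).toReal * (mYZ P n s y z).toReal / (mZ P n s z).toReal) := by
          rw [div_le_iff₀ (mul_pos hxz hyz)] at harg2
          rw [mul_div_assoc', le_div_iff₀ hz]
          nlinarith [harg2]
        calc P n s (x, y, z) = ENNReal.ofReal (P n s (x, y, z)).toReal :=
              (ENNReal.ofReal_toReal (dp_P_ne_top P n s _)).symm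
          _ ≤ _ := ENNReal.ofReal_le_ofReal hfinal
      · rw [Set.indicator_of_notMem
          (show w ∉ {w' : A n × B n × C n | iXYgZ P n s w' ≤ -γ} from hmem)]
        exact zero_le
    calc ∑ w : A n × B n × C n, {w' : A n × B n × C n | iXYgZ P n s w' ≤ -γ}.indicator
          (fun w' => P n s w') w
        ≤ ∑ w : A n × B n × C n, ENNReal.ofReal
            (e * ((mXZ P n s w.1 w.2.2).toReal * (mYZ P n s w.2.1 w.2.2).toReal /
              (mZ P n s w.2.2).toReal)) := Finset.sum_le_sum fun w _ => key w
      _ = ENNReal.ofReal (∑ w : A n × B n × C n,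
            e * ((mXZ P n s w.1 w.2.2).toReal * (mYZ P n s w.2.1 w.2.2).toReal /
              (mZ P n s w.2.2).toReal)) := by
          rw [ENNReal.ofReal_sum_of_nonneg]
          intro w _
          positivity
      _ = ENNReal.ofReal e := by
          congr 1
          rw [← Finset.mul_sum]
          have hsum : ∑ w : A n × B n × C n,
              (mXZ P n s w.1 w.2.2).toReal * (mYZ P n s w.2.1 w.2.2).toReal /
                (mZ P n s w.2.2).toReal = 1 := by
            have hz1 : ∀ z : C n, ∑ x : A n, (mXZ P n s x z).toReal = (mZ P n s z).toReal := by
              intro z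
              rw [← ENNReal.toReal_sum (fun x _ => dp_mXZ_ne_top P n s x z)]
              rfl
            have hz2 : ∀ z : C n, ∑ y : B n, (mYZ P n s y z).toReal = (mZ P n s z).toReal := by
              intro z
              rw [← ENNReal.toReal_sum (fun y _ => dp_mYZ_ne_top P n s y z)]
              congr 1
              exact Finset.sum_comm
            have hinner : ∀ z : C n, ∑ x : A n, ∑ y : B n,
                (mXZ P n s x z).toReal * (mYZ P n s y z).toReal / (mZ P n s z).toReal =
                (mZ P n s z).toReal := by
              intro z
              rcases eq_or_ne (mZ P n s z).toReal 0 with h0 | h0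
              · simp [h0]
              · have : ∑ x : A n, ∑ y : B n,
                    (mXZ P n s x z).toReal * (mYZ P n s y z).toReal / (mZ P n s z).toReal =
                    (∑ x : A n, (mXZ P n s x z).toReal) *
                      ((∑ y : B n, (mYZ P n s y z).toReal) / (mZ P n s z).toReal) := by
                  rw [Finset.sum_mul]
                  refine Finset.sum_congr rfl fun x _ => ?_
                  rw [Finset.sum_div, Finset.mul_sum]
                  exact Finset.sum_congr rfl fun y _ => mul_div_assoc _ _ _
                rw [this, hz1 z, hz2 z, div_self h0, mul_one]
            calc ∑ w : A n × B n × C n,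
                  (mXZ P n s w.1 w.2.2).toReal * (mYZ P n s w.2.1 w.2.2).toReal /
                    (mZ P n s w.2.2).toReal
                = ∑ x : A n, ∑ y : B n, ∑ z : C n,
                    (mXZ P n s x z).toReal * (mYZ P n s y z).toReal / (mZ P n s z).toReal := by
                  rw [Fintype.sum_prod_type]
                  exact Finset.sum_congr rfl fun x _ =>
                    Fintype.sum_prod_type (f := fun p : B n × C n =>
                      (mXZ P n s x p.2).toReal * (mYZ P n s p.1 p.2).toReal /
                        (mZ P n s p.2).toReal)
              _ = ∑ x : A n, ∑ z : C n, ∑ y : B n,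
                    (mXZ P n s x z).toReal * (mYZ P n s y z).toReal / (mZ P n s z).toReal :=
                  Finset.sum_congr rfl fun x _ => Finset.sum_comm
              _ = ∑ z : C n, ∑ x : A n, ∑ y : B n,
                    (mXZ P n s x z).toReal * (mYZ P n s y z).toReal / (mZ P n s z).toReal :=
                  Finset.sum_comm
              _ = ∑ z : C n, (mZ P n s z).toReal :=
                  Finset.sum_congr rfl fun z _ => hinner z
              _ = 1 := by
                  rw [← ENNReal.toReal_sum (fun z _ => dp_mZ_ne_top P n s z), dp_sum_mZ]
                  simp
          rw [hsum, mul_one]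
      _ = _ := rfl

end AuxDP

/-- data processing inequality for compound inf-information rates: if
`X → Y → Z` is a Markov chain under every `P_{n,s}`, then (assuming finiteness of the
quantities involved) `cinf I(X;Y) ≥ cinf I(X;Z)`, with equality when `csup I(X;Y|Z) = 0`. -/
theorem compound_data_processing {S : Type*} [Nonempty S]
    {A B C : ℕ → Type*} [∀ n, Fintype (A n)] [∀ n, Nonempty (A n)]
    [∀ n, Fintype (B n)] [∀ n, Nonempty (B n)] [∀ n, Fintype (C n)] [∀ n, Nonempty (C n)]
    (P : ∀ n, S → PMF (A n × B n × C n))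
    (hMarkov : ∀ n s x y c,
      P n s (x, y, c) * mY P n s y = mXY P n s x y * mYZ P n s y c)
    (h₁ : (cinfSet P (iXY P)).Nonempty) (h₂ : BddAbove (cinfSet P (iXY P)))
    (h₃ : (cinfSet P (iXZ P)).Nonempty) (h₄ : BddAbove (cinfSet P (iXZ P)))
    (h₅ : (csupSet P (iXYgZ P)).Nonempty) (h₆ : BddBelow (csupSet P (iXYgZ P))) :
    cinf P (iXZ P) ≤ cinf P (iXY P) ∧
    (csup P (iXYgZ P) = 0 → cinf P (iXY P) = cinf P (iXZ P)) := by
  classical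
  have expTend : ∀ γ : ℝ, 0 < γ →
      Tendsto (fun n : ℕ => ENNReal.ofReal (Real.exp (-((n:ℝ) * γ)))) atTop (nhds 0) := by
    intro γ hγ
    rw [show (0:ℝ≥0∞) = ENNReal.ofReal 0 by simp]
    exact ENNReal.tendsto_ofReal (Real.tendsto_exp_atBot.comp
      (tendsto_neg_atTop_atBot.comp ((tendsto_natCast_atTop_atTop (R := ℝ)).atTop_mul_const hγ)))
  have mem1 : ∀ γ : ℝ, 0 < γ → ∀ R ∈ cinfSet P (iXZ P), (R - γ) ∈ cinfSet P (iXY P) := by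
    intro γ hγ R hR
    have hR' : Tendsto (fun n => ⨆ s : S, ∑ w : A n × B n × C n,
        {w' : A n × B n × C n | iXZ P n s w' ≤ R}.indicator (fun w' => P n s w') w)
        atTop (nhds 0) := hR
    show Tendsto (fun n => ⨆ s : S, ∑ w : A n × B n × C n,
        {w' : A n × B n × C n | iXY P n s w' ≤ R - γ}.indicator (fun w' => P n s w') w)
        atTop (nhds 0)
    refine tendsto_of_tendsto_of_tendsto_of_le_of_le (g := fun _ => 0) tendsto_const_nhds
      (?_ : Tendsto (fun n => (⨆ s : S, ∑ w : A n × B n × C n,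
        {w' : A n × B n × C n | iXZ P n s w' ≤ R}.indicator (fun w' => P n s w') w)
        + ENNReal.ofReal (Real.exp (-((n:ℝ) * γ)))) atTop (nhds 0))
      (fun n => zero_le) ?_
    · have h := hR'.add (expTend γ hγ)
      simpa using h
    · intro n
      refine iSup_le fun s => ?_
      calc ∑ w : A n × B n × C n,
            {w' : A n × B n × C n | iXY P n s w' ≤ R - γ}.indicator (fun w' => P n s w') w
          ≤ (∑ w : A n × B n × C n,
              {w' : A n × B n × C n | iXZ P n s w' ≤ R}.indicator (fun w' => P n s w') w) +
            ∑ w : A n × B n × C n,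
              {w' : A n × B n × C n | iXYgZ P n s w' ≤ -γ}.indicator (fun w' => P n s w') w := by
            rw [show R - γ = R + -γ from sub_eq_add_neg R γ]
            exact dp_union1 (fun w => P n s w) (iXY P n s) (iXZ P n s) (iXYgZ P n s) R (-γ)
              (fun w hw => le_of_eq (dp_chain P hMarkov n s w hw).symm)
        _ ≤ (∑ w : A n × B n × C n,
              {w' : A n × B n × C n | iXZ P n s w' ≤ R}.indicator (fun w' => P n s w') w) +
            ENNReal.ofReal (Real.exp (-((n:ℝ) * γ))) :=
            add_le_add_right (dp_exp_bound P n s γ hγ) _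
        _ ≤ _ := add_le_add_left (le_iSup (fun s => ∑ w : A n × B n × C n,
              {w' : A n × B n × C n | iXZ P n s w' ≤ R}.indicator (fun w' => P n s w') w) s) _
  have part1 : cinf P (iXZ P) ≤ cinf P (iXY P) := by
    refine le_of_forall_pos_le_add fun ε hε => ?_
    refine csSup_le h₃ fun R hR => ?_
    have h : R - ε ≤ cinf P (iXY P) := le_csSup h₂ (mem1 ε hε R hR)
    linarith
  refine ⟨part1, fun h0 => le_antisymm ?_ part1⟩
  have memSup : ∀ γ : ℝ, 0 < γ → γ ∈ csupSet P (iXYgZ P) := by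
    intro γ hγ
    have hlt : sInf (csupSet P (iXYgZ P)) < γ := by
      rw [show sInf (csupSet P (iXYgZ P)) = csup P (iXYgZ P) from rfl, h0]; exact hγ
    obtain ⟨R0, hR0mem, hR0⟩ := exists_lt_of_csInf_lt h₅ hlt
    have hR0' : Tendsto (fun n => ⨆ s : S, ∑ w : A n × B n × C n,
        {w' : A n × B n × C n | R0 ≤ iXYgZ P n s w'}.indicator (fun w' => P n s w') w)
        atTop (nhds 0) := hR0mem
    show Tendsto (fun n => ⨆ s : S, ∑ w : A n × B n × C n,
        {w' : A n × B n × C n | γ ≤ iXYgZ P n s w'}.indicator (fun w' => P n s w') w)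
        atTop (nhds 0)
    refine tendsto_of_tendsto_of_tendsto_of_le_of_le (g := fun _ => 0) tendsto_const_nhds hR0'
      (fun n => zero_le) ?_
    intro n
    exact iSup_mono fun s => Finset.sum_le_sum fun w _ =>
      Set.indicator_le_indicator_of_subset (fun w' hw' => le_trans hR0.le hw')
        (fun _ => zero_le) w
  have mem2 : ∀ γ : ℝ, 0 < γ → ∀ R ∈ cinfSet P (iXY P),
      (R - (γ + γ)) ∈ cinfSet P (iXZ P) := by
    intro γ hγ R hR
    have hR' : Tendsto (fun n => ⨆ s : S, ∑ w : A n × B n × C n,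
        {w' : A n × B n × C n | iXY P n s w' ≤ R}.indicator (fun w' => P n s w') w)
        atTop (nhds 0) := hR
    have hmemSup := memSup γ hγ
    have hSup' : Tendsto (fun n => ⨆ s : S, ∑ w : A n × B n × C n,
        {w' : A n × B n × C n | γ ≤ iXYgZ P n s w'}.indicator (fun w' => P n s w') w)
        atTop (nhds 0) := hmemSup
    show Tendsto (fun n => ⨆ s : S, ∑ w : A n × B n × C n,
        {w' : A n × B n × C n | iXZ P n s w' ≤ R - (γ + γ)}.indicator (fun w' => P n s w') w)
        atTop (nhds 0)
    refine tendsto_of_tendsto_of_tendsto_of_le_of_le (g := fun _ => 0) tendsto_const_nhds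
      (?_ : Tendsto (fun n => (⨆ s : S, ∑ w : A n × B n × C n,
          {w' : A n × B n × C n | iXY P n s w' ≤ R}.indicator (fun w' => P n s w') w)
        + ⨆ s : S, ∑ w : A n × B n × C n,
          {w' : A n × B n × C n | γ ≤ iXYgZ P n s w'}.indicator (fun w' => P n s w') w)
        atTop (nhds 0))
      (fun n => zero_le) ?_
    · have h := hR'.add hSup'
      simpa using h
    · intro n
      refine iSup_le fun s => ?_
      calc ∑ w : A n × B n × C n,
            {w' : A n × B n × C n | iXZ P n s w' ≤ R - (γ + γ)}.indicator (fun w' => P n s w') w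
          ≤ (∑ w : A n × B n × C n,
              {w' : A n × B n × C n | iXY P n s w' ≤ R - (γ + γ) + γ}.indicator
                (fun w' => P n s w') w) +
            ∑ w : A n × B n × C n,
              {w' : A n × B n × C n | γ ≤ iXYgZ P n s w'}.indicator (fun w' => P n s w') w :=
            dp_union2 (fun w => P n s w) (iXY P n s) (iXZ P n s) (iXYgZ P n s) (R - (γ + γ)) γ
              (fun w hw => le_of_eq (dp_chain P hMarkov n s w hw))
        _ ≤ (∑ w : A n × B n × C n,
              {w' : A n × B n × C n | iXY P n s w' ≤ R}.indicator (fun w' => P n s w') w) +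
            ∑ w : A n × B n × C n,
              {w' : A n × B n × C n | γ ≤ iXYgZ P n s w'}.indicator (fun w' => P n s w') w := by
            refine add_le_add_left (Finset.sum_le_sum fun w _ => ?_) _
            refine Set.indicator_le_indicator_of_subset (fun w' hw' => ?_) (fun _ => zero_le) w
            have : iXY P n s w' ≤ R - (γ + γ) + γ := hw'
            simp only [Set.mem_setOf_eq]
            linarith
        _ ≤ _ := add_le_add
            (le_iSup (fun s => ∑ w : A n × B n × C n,
              {w' : A n × B n × C n | iXY P n s w' ≤ R}.indicator (fun w' => P n s w') w) s)
            (le_iSup (fun s => ∑ w : A n × B n × C n,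
              {w' : A n × B n × C n | γ ≤ iXYgZ P n s w'}.indicator (fun w' => P n s w') w) s)
  refine le_of_forall_pos_le_add fun ε hε => ?_
  refine csSup_le h₁ fun R hR => ?_
  have h : R - (ε/2 + ε/2) ≤ cinf P (iXZ P) := le_csSup h₄ (mem2 (ε/2) (by linarith) R hR)
  have h2 : R - (ε/2 + ε/2) = R - ε := by ring
  rw [h2] at h
  linarith

end
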